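/- For every integer k ≥ 1 and real α > 0, the identity ∑_{t=0}^{⌊k/2⌋} (1/(k-t))·C(k-t, t)·α^t = ((-1)^k / k) · (β^k + (β-1)^k) / (1-2β)^k holds, where β ∈ (0, 1/2) is such that α = β(1-β)/(1-2β)². -/

import Mathlib

open Finset

def cc (k t : ℕ) : ℕ :=
  if t = 0 then 1
  else if 2 * t ≤ k then Nat.choose (k - t) t + Nat.choose (k - t - 1) (t - 1) else 0

lemma cc_vanish {k t : ℕ} (h : k < 2 * t) : cc k t = 0 := by
  have ht : ¬ t = 0 := by omega
  have h2 : ¬ 2 * t ≤ k := by omega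
  simp [cc, ht, h2]

lemma cc_mul (k t : ℕ) (h2 : 2 * t ≤ k) :
    k * Nat.choose (k - t) t = (k - t) * cc k t := by
  rcases Nat.eq_zero_or_pos t with rfl | ht
  · simp [cc]
  · obtain ⟨u, rfl⟩ : ∃ u, t = u + 1 := ⟨t - 1, by omega⟩
    obtain ⟨d, rfl⟩ : ∃ d, k = 2 * (u + 1) + d := ⟨k - 2 * (u + 1), by omega⟩
    have ht0 : ¬ (u + 1 = 0) := by omega
    have hg : 2 * (u + 1) ≤ 2 * (u + 1) + d := by omega
    simp only [cc, ht0, if_false, hg, if_true,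
      show 2 * (u + 1) + d - (u + 1) = u + d + 1 from by omega,
      show u + d + 1 - 1 = u + d from by omega,
      show u + 1 - 1 = u from by omega]
    have h := Nat.add_one_mul_choose_eq (u + d) u
    have expand : (u + d + 1) * ((u + d + 1).choose (u + 1) + (u + d).choose u)
        = (u + d + 1) * ((u + d + 1).choose (u + 1)) + (u + d + 1) * (u + d).choose u := by
      ring
    rw [expand, h]
    ring

lemma cc_rec (k t : ℕ) (hk : 1 ≤ k) : cc (k + 2) (t + 1) = cc (k + 1) (t + 1) + cc k t := by
  rcases Nat.eq_zero_or_pos t with rfl | ht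
  · -- t = 0
    have g1 : 2 * (0 + 1) ≤ k + 2 := by omega
    have g2 : 2 * (0 + 1) ≤ k + 1 := by omega
    simp only [cc, show ¬ (0 + 1 = 0) from by omega, if_false, g1, g2, if_true,
      if_pos rfl,
      show k + 2 - (0 + 1) = k + 1 from by omega,
      show k + 1 - (0 + 1) = k from by omega,
      show k + 1 - 1 = k from by omega,
      show (0 + 1 : ℕ) - 1 = 0 from rfl,
      show (0 : ℕ) + 1 = 1 from rfl,
      Nat.choose_one_right, Nat.choose_zero_right]
  · obtain ⟨u, rfl⟩ : ∃ u, t = u + 1 := ⟨t - 1, by omega⟩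
    rcases lt_trichotomy (2 * (u + 1)) k with h | h | h
    · -- main case : 2u+3 ≤ k
      have g1 : 2 * (u + 1 + 1) ≤ k + 2 := by omega
      have g2 : 2 * (u + 1 + 1) ≤ k + 1 := by omega
      have g3 : 2 * (u + 1) ≤ k := by omega
      simp only [cc, show ¬ (u + 1 + 1 = 0) from by omega, show ¬ (u + 1 = 0) from by omega,
        if_false, g1, g2, g3, if_true,
        show k + 2 - (u + 1 + 1) = k - u from by omega,
        show k - u - 1 - 1 = k - u - 2 from by omega,
        show k + 1 - (u + 1 + 1) = k - u - 1 from by omega,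
        show k + 1 - (u + 1 + 1) - 1 = k - u - 2 from by omega,
        show k - (u + 1) = k - u - 1 from by omega,
        show k - (u + 1) - 1 = k - u - 2 from by omega,
        show u + 1 + 1 - 1 = u + 1 from by omega,
        show u + 1 - 1 = u from by omega]
      rw [show Nat.choose (k - u) (u + 1 + 1)
            = Nat.choose (k - u - 1) (u + 1) + Nat.choose (k - u - 1) (u + 1 + 1) from by
          rw [show k - u = (k - u - 1) + 1 from by omega]
          exact Nat.choose_succ_succ _ _,
        show Nat.choose (k - u - 1) (u + 1)
            = Nat.choose (k - u - 2) u + Nat.choose (k - u - 2) (u + 1) from by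
          rw [show k - u - 1 = (k - u - 2) + 1 from by omega]
          exact Nat.choose_succ_succ _ _]
      omega
    · -- boundary : 2(u+1) = k
      have g1 : 2 * (u + 1 + 1) ≤ k + 2 := by omega
      have g2 : ¬ (2 * (u + 1 + 1) ≤ k + 1) := by omega
      have g3 : 2 * (u + 1) ≤ k := by omega
      simp only [cc, show ¬ (u + 1 + 1 = 0) from by omega, show ¬ (u + 1 = 0) from by omega,
        if_false, g1, g3, if_true, g2,
        show k + 2 - (u + 1 + 1) = u + 2 from by omega,
        show u + 2 - 1 = u + 1 from by omega,
        show k - (u + 1) = u + 1 from by omega,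
        show u + 1 + 1 - 1 = u + 1 from by omega,
        show u + 1 - 1 = u from by omega]
      simp [Nat.choose_self, show Nat.choose (u+2) (u+1+1) = 1 from by
        rw [show u + 1 + 1 = u + 2 from rfl]; exact Nat.choose_self _,
        show Nat.choose (u+1) (u+1) = 1 from Nat.choose_self _]
    · -- all zero : k < 2(u+1)
      have g1 : ¬ (2 * (u + 1 + 1) ≤ k + 2) := by omega
      have g2 : ¬ (2 * (u + 1 + 1) ≤ k + 1) := by omega
      have g3 : ¬ (2 * (u + 1) ≤ k) := by omega
      simp [cc, g1, g2, g3]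

lemma sum_rec (α : ℝ) (k : ℕ) (hk : 1 ≤ k) :
    ∑ t ∈ range (k + 3), (cc (k + 2) t : ℝ) * α ^ t
      = ∑ t ∈ range (k + 2), (cc (k + 1) t : ℝ) * α ^ t
        + α * ∑ t ∈ range (k + 1), (cc k t : ℝ) * α ^ t := by
  rw [show k + 3 = (k + 2) + 1 from rfl,
    Finset.sum_range_succ' (fun t => (cc (k + 2) t : ℝ) * α ^ t) (k + 2)]
  have step : ∀ t ∈ range (k + 2), (cc (k + 2) (t + 1) : ℝ) * α ^ (t + 1)
      = (cc (k + 1) (t + 1) : ℝ) * α ^ (t + 1) + α * ((cc k t : ℝ) * α ^ t) := by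
    intro t _
    rw [cc_rec k t hk]
    push_cast
    ring
  rw [Finset.sum_congr rfl step, Finset.sum_add_distrib]
  have hM : ∑ t ∈ range (k + 2), (cc (k + 1) t : ℝ) * α ^ t
      = ∑ t ∈ range (k + 1 + 1), (cc (k + 1) (t + 1) : ℝ) * α ^ (t + 1)
        + (cc (k + 1) 0 : ℝ) * α ^ 0 := by
    have h1 := Finset.sum_range_succ' (fun t => (cc (k + 1) t : ℝ) * α ^ t) (k + 2)
    have h2 := Finset.sum_range_succ (fun t => (cc (k + 1) t : ℝ) * α ^ t) (k + 2)
    have hv : (cc (k + 1) (k + 2) : ℝ) = 0 := by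
      rw [cc_vanish (by omega)]; norm_num
    rw [hv] at h2
    rw [show k + 2 + 1 = k + 3 from rfl] at h1 h2
    rw [← h2.symm.trans h1]
    ring
  have hS2 : ∑ t ∈ range (k + 2), α * ((cc k t : ℝ) * α ^ t)
      = α * ∑ t ∈ range (k + 1), (cc k t : ℝ) * α ^ t := by
    rw [← Finset.mul_sum, Finset.sum_range_succ, cc_vanish (show k < 2 * (k + 1) from by omega)]
    norm_num
  rw [hM, hS2]
  have c1 : (cc (k + 2) 0 : ℝ) = 1 := by norm_num [cc]
  have c2 : (cc (k + 1) 0 : ℝ) = 1 := by norm_num [cc]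
  rw [c1, c2]
  ring

lemma key (α x y : ℝ) (hxy : x + y = -1) (hmul : x * y = -α) :
    ∀ n : ℕ,
      (∑ t ∈ range (n + 2), (cc (n + 1) t : ℝ) * α ^ t
          = (-1) ^ (n + 1) * (x ^ (n + 1) + y ^ (n + 1)))
      ∧ (∑ t ∈ range (n + 3), (cc (n + 2) t : ℝ) * α ^ t
          = (-1) ^ (n + 2) * (x ^ (n + 2) + y ^ (n + 2))) := by
  have hx2 : x ^ 2 = α - x := by linear_combination x * hxy - hmul
  have hy2 : y ^ 2 = α - y := by linear_combination y * hxy - hmul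
  intro n
  induction n with
  | zero =>
    constructor
    · norm_num [Finset.sum_range_succ, cc]
      linarith
    · norm_num [Finset.sum_range_succ, cc]
      linear_combination hxy - hx2 - hy2
  | succ n ih =>
    obtain ⟨ih1, ih2⟩ := ih
    refine ⟨ih2, ?_⟩
    rw [show n + 1 + 2 = n + 1 + 2 from rfl, show n + 1 + 3 = (n + 1) + 3 from rfl,
      sum_rec α (n + 1) (by omega)]
    rw [show n + 1 + 1 = n + 2 from rfl, show n + 1 + 2 = n + 3 from rfl] at *
    rw [ih1, ih2]
    linear_combination (-(-1:ℝ) ^ (n + 1) * x ^ (n + 1)) * hx2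
      + (-(-1:ℝ) ^ (n + 1) * y ^ (n + 1)) * hy2

theorem cycle_sum_identity (k : ℕ) (hk : 1 ≤ k) (α β : ℝ)
    (hβ : β ∈ Set.Ioo (0 : ℝ) (1 / 2)) (hα : 0 < α)
    (hαβ : α = β * (1 - β) / (1 - 2 * β) ^ 2) :
    ∑ t ∈ Finset.range (k / 2 + 1),
        (1 / ((k - t : ℕ) : ℝ)) * (Nat.choose (k - t) t : ℝ) * α ^ t
      = ((-1 : ℝ) ^ k / k) * ((β ^ k + (β - 1) ^ k) / (1 - 2 * β) ^ k) := by
  obtain ⟨hβ0, hβh⟩ := hβ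
  have h12 : (0 : ℝ) < 1 - 2 * β := by linarith
  have h12' : (1 : ℝ) - 2 * β ≠ 0 := ne_of_gt h12
  have hxy : β / (1 - 2 * β) + (β - 1) / (1 - 2 * β) = -1 := by
    rw [← add_div, div_eq_iff h12']
    ring
  have hmul : (β / (1 - 2 * β)) * ((β - 1) / (1 - 2 * β)) = -α := by
    rw [hαβ]
    field_simp
    ring
  obtain ⟨n, rfl⟩ : ∃ n, k = n + 1 := ⟨k - 1, by omega⟩
  have hkey := (key α (β / (1 - 2 * β)) ((β - 1) / (1 - 2 * β)) hxy hmul n).1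
  have hkR : ((n + 1 : ℕ) : ℝ) ≠ 0 := by positivity
  -- step 1: termwise rewrite on range ((n+1)/2 + 1)
  have step1 : ∑ t ∈ Finset.range ((n + 1) / 2 + 1),
      (1 / ((n + 1 - t : ℕ) : ℝ)) * (Nat.choose (n + 1 - t) t : ℝ) * α ^ t
      = ∑ t ∈ Finset.range ((n + 1) / 2 + 1),
        (1 / ((n + 1 : ℕ) : ℝ)) * ((cc (n + 1) t : ℝ) * α ^ t) := by
    refine Finset.sum_congr rfl fun t ht => ?_
    rw [Finset.mem_range] at ht
    have h2t : 2 * t ≤ n + 1 := by omega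
    have hnt : 1 ≤ n + 1 - t := by omega
    have hntR : ((n + 1 - t : ℕ) : ℝ) ≠ 0 :=
      Nat.cast_ne_zero.mpr (by omega)
    have hcast : ((n + 1 : ℕ) : ℝ) * (Nat.choose (n + 1 - t) t : ℝ)
        = ((n + 1 - t : ℕ) : ℝ) * (cc (n + 1) t : ℝ) := by
      exact_mod_cast congrArg (Nat.cast (R := ℝ)) (cc_mul (n + 1) t h2t)
    push_cast [Nat.cast_sub (show t ≤ n + 1 from by omega)] at hcast hntR ⊢
    field_simp
    linear_combination hcast
  rw [step1, ← Finset.mul_sum]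
  -- step 2: extend the range
  have step2 : ∑ t ∈ Finset.range ((n + 1) / 2 + 1), (cc (n + 1) t : ℝ) * α ^ t
      = ∑ t ∈ Finset.range (n + 2), (cc (n + 1) t : ℝ) * α ^ t := by
    refine Finset.sum_subset (Finset.range_subset_range.2 (by omega)) fun t _ ht => ?_
    rw [Finset.mem_range, not_lt] at ht
    rw [cc_vanish (show n + 1 < 2 * t from by omega)]
    norm_num
  rw [step2, hkey, div_pow, div_pow]
  push_cast
  field_simp
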